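/- Let S be an n×n row-stochastic matrix and let {C_1,…,C_k} be a partition of {1,…,n} into k nonempty clusters with BCM matrix Y and normalization Ŷ = Y(YᵀY)^{-1/2}. Then the multi-hop conductance Φ({C_1,…,C_k}) = (1/k)·Σ_{C} (1/|C|)·Σ_{i∈C} Σ_{j∉C} S[i,j] satisfies Φ({C_1,…,C_k}) = 1 − (1/k)·trace(Ŷᵀ S Ŷ). -/
import Mathlib


open Matrix

/-- For row-stochastic `S` and a partition of `{1,…,n}` into `k` nonempty clusters
(given by the surjective cluster assignment `c`), the multi-hop conductance equals
`1 − (1/k)·trace(Ŷᵀ S Ŷ)`. -/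
theorem stmt6 {n k : ℕ} (hn : 0 < n) (S : Matrix (Fin n) (Fin n) ℝ)
    (hS0 : ∀ i j, 0 ≤ S i j) (hS1 : ∀ i, ∑ j, S i j = 1)
    (c : Fin n → Fin k) (hc : Function.Surjective c)
    (Y : Matrix (Fin n) (Fin k) ℝ)
    (hY : ∀ i j, Y i j = if c i = j then 1 else 0)
    (Yhat : Matrix (Fin n) (Fin k) ℝ)
    (hYhat : Yhat = Y * Matrix.diagonal fun j => (Real.sqrt (∑ i, Y i j))⁻¹) :
    (k : ℝ)⁻¹ * ∑ t : Fin k,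
        ((Finset.univ.filter fun i => c i = t).card : ℝ)⁻¹ *
          ∑ i ∈ Finset.univ.filter fun i => c i = t,
            ∑ j ∈ Finset.univ.filter fun j => c j ≠ t, S i j
      = 1 - (k : ℝ)⁻¹ * (Yhatᵀ * S * Yhat).trace := by
  have hk : 0 < k := by
    rcases Nat.eq_zero_or_pos k with h | h
    · exact (c ⟨0, hn⟩).pos
    · exact h
  set m : Fin k → ℝ := fun t => ((Finset.univ.filter fun i => c i = t).card : ℝ) with hm
  have hmpos : ∀ t, 0 < m t := by
    intro t
    obtain ⟨i, hi⟩ := hc t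
    have : i ∈ Finset.univ.filter fun i => c i = t := by simp [hi]
    have h2 := Finset.card_pos.mpr ⟨i, this⟩
    show (0:ℝ) < ((Finset.univ.filter fun i => c i = t).card : ℝ)
    exact_mod_cast h2
  have hsumY : ∀ t, (∑ i, Y i t) = m t := by
    intro t
    simp only [hY]
    rw [Finset.sum_boole]
  have htr : (Yhatᵀ * S * Yhat).trace
      = ∑ t, (m t)⁻¹ * ∑ i ∈ Finset.univ.filter (fun i => c i = t),
          ∑ j ∈ Finset.univ.filter (fun j => c j = t), S i j := by
    subst hYhat
    unfold Matrix.trace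
    congr 1
    ext t
    have hd : ∀ i : Fin n, (Y * Matrix.diagonal fun j => (Real.sqrt (∑ i, Y i j))⁻¹) i t
        = Y i t * (Real.sqrt (m t))⁻¹ := by
      intro i; rw [Matrix.mul_diagonal, hsumY]
    have hsq : (Real.sqrt (m t))⁻¹ * (Real.sqrt (m t))⁻¹ = (m t)⁻¹ := by
      rw [← mul_inv]
      rw [Real.mul_self_sqrt (hmpos t).le]
    have step : ∀ j, (∑ i, Y i t * (Real.sqrt (m t))⁻¹ * S i j) * (Y j t * (Real.sqrt (m t))⁻¹)
        = (m t)⁻¹ * ((∑ i, Y i t * S i j) * Y j t) := by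
      intro j
      simp only [Finset.sum_mul, Finset.mul_sum]
      apply Finset.sum_congr rfl
      intro i _
      rw [← hsq]; ring
    have inner : ∀ j, (∑ i, Y i t * S i j)
        = ∑ i ∈ Finset.univ.filter (fun i => c i = t), S i j := by
      intro j
      rw [Finset.sum_filter]
      apply Finset.sum_congr rfl
      intro i _
      rw [hY]
      split <;> simp
    simp only [Matrix.diag, Matrix.mul_apply, Matrix.transpose_apply, hd, step, inner]
    rw [← Finset.mul_sum]
    congr 1
    have : ∀ j, (∑ i ∈ Finset.univ.filter (fun i => c i = t), S i j) * Y j t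
        = if c j = t then ∑ i ∈ Finset.univ.filter (fun i => c i = t), S i j else 0 := by
      intro j
      rw [hY]
      split <;> simp
    simp only [this]
    rw [← Finset.sum_filter]
    exact Finset.sum_comm
  rw [htr]
  have key : ∀ t ∈ Finset.univ, (m t)⁻¹ * ∑ i ∈ Finset.univ.filter (fun i => c i = t),
      ∑ j ∈ Finset.univ.filter (fun j => c j ≠ t), S i j
      = 1 - (m t)⁻¹ * ∑ i ∈ Finset.univ.filter (fun i => c i = t),
          ∑ j ∈ Finset.univ.filter (fun j => c j = t), S i j := by
    intro t _
    have hsplit : ∀ i ∈ Finset.univ.filter (fun i => c i = t),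
        (∑ j ∈ Finset.univ.filter (fun j => c j ≠ t), S i j)
        = 1 - ∑ j ∈ Finset.univ.filter (fun j => c j = t), S i j := by
      intro i _
      have := Finset.sum_filter_add_sum_filter_not Finset.univ (fun j => c j = t) (fun j => S i j)
      rw [hS1 i] at this
      linarith
    rw [Finset.sum_congr rfl hsplit, Finset.sum_sub_distrib, Finset.sum_const,
      nsmul_eq_mul, mul_one, mul_sub, inv_mul_cancel₀ (hmpos t).ne']
  rw [Finset.sum_congr rfl key, Finset.sum_sub_distrib, Finset.sum_const,
    Finset.card_univ, Fintype.card_fin, nsmul_eq_mul, mul_one, mul_sub,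
    inv_mul_cancel₀ (by exact_mod_cast hk.ne' : (k:ℝ) ≠ 0)]
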